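/- Define ℬ to be the following set of n² real n×n matrices (n ≥ 3): the n diagonal matrices with entry (1/2)^{n-1} in one diagonal position and 2 in the remaining n-1 diagonal positions, together with the n²-n matrices having (1/2)^{n-1} in the upper left corner, 2 in the other diagonal positions, 1 in exactly one off-diagonal position, and 0 elsewhere. Then every element of ℬ has determinant 1, and ℬ is a basis of the vector space Mₙ(ℝ) of all n×n real matrices. -/

import Mathlib

lemma det_diag_add_std {n : ℕ} (d : Fin n → ℝ) {i j : Fin n} (h : i ≠ j) (c : ℝ) :
    (Matrix.diagonal d + Matrix.single i j c).det = (Matrix.diagonal d).det := by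
  have hrow : Matrix.diagonal d + Matrix.single i j c
      = (Matrix.diagonal d).updateRow i (Matrix.diagonal d i + Pi.single j c) := by
    ext a b
    by_cases ha : a = i <;>
      simp [ha, Matrix.updateRow_apply, Matrix.single, Pi.single_apply, eq_comm] <;>
      simp_all [eq_comm]
  rw [hrow, Matrix.det_updateRow_add, Matrix.updateRow_eq_self]
  have hsingle : (Pi.single j c : Fin n → ℝ) = c • (Pi.single j 1 : Fin n → ℝ) := by
    ext b; simp [Pi.single_apply]
  rw [hsingle, Matrix.det_updateRow_smul]
  set N : Matrix (Fin n) (Fin n) ℝ := (Matrix.diagonal d).updateRow i (Pi.single j 1) with hN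
  have hNj : N j = d j • (Pi.single j 1 : Fin n → ℝ) := by
    ext b
    simp [hN, Matrix.updateRow_apply, Ne.symm h, Matrix.diagonal_apply, Pi.single_apply, eq_comm]
  have hdet : N.det = 0 := by
    have h1 : N = N.updateRow j (d j • (Pi.single j 1 : Fin n → ℝ)) := by
      rw [← hNj, Matrix.updateRow_eq_self]
    have h2 : (N.updateRow j (Pi.single j 1 : Fin n → ℝ)).det = 0 := by
      apply Matrix.det_zero_of_row_eq h
      simp [hN, Matrix.updateRow_apply, h, Ne.symm h]
    calc N.det = (N.updateRow j (d j • (Pi.single j 1 : Fin n → ℝ))).det := by rw [← h1]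
    _ = d j * (N.updateRow j (Pi.single j 1 : Fin n → ℝ)).det := Matrix.det_updateRow_smul _ _ _ _
    _ = 0 := by rw [h2, mul_zero]
  rw [hdet]; ring

lemma prod_diag_one {n : ℕ} (hn : 1 ≤ n) (i : Fin n) :
    (∏ k : Fin n, (if k = i then ((1 : ℝ) / 2) ^ (n - 1) else 2)) = 1 := by
  rw [← Finset.mul_prod_erase Finset.univ _ (Finset.mem_univ i)]
  have herase : (∏ k ∈ Finset.univ.erase i, (if k = i then ((1 : ℝ) / 2) ^ (n - 1) else 2))
      = 2 ^ (n - 1) := by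
    rw [Finset.prod_congr rfl (fun k hk => by
      rw [if_neg (Finset.ne_of_mem_erase hk)]), Finset.prod_const,
      Finset.card_erase_of_mem (Finset.mem_univ i), Finset.card_univ, Fintype.card_fin]
  rw [if_pos rfl, herase, ← mul_pow]
  norm_num

/-- The family `ℬ` of `n²` matrices, indexed by pairs `(i, j)`: for `i = j` the diagonal
matrix with `(1/2)^(n-1)` in position `i` and `2` in the remaining diagonal positions;
for `i ≠ j` the matrix with `(1/2)^(n-1)` in the upper left corner, `2` in the other
diagonal positions, `1` in position `(i, j)` and `0` elsewhere. -/
noncomputable def Bmat (n : ℕ) [NeZero n] (p : Fin n × Fin n) : Matrix (Fin n) (Fin n) ℝ :=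
  if p.1 = p.2 then
    Matrix.diagonal (fun k => if k = p.1 then ((1 : ℝ) / 2) ^ (n - 1) else 2)
  else
    Matrix.diagonal (fun k => if k = 0 then ((1 : ℝ) / 2) ^ (n - 1) else 2) +
      Matrix.single p.1 p.2 1

/-- Every member of `ℬ` has determinant `1`, and `ℬ` is a basis of `Mₙ(ℝ)`. -/
theorem stmt_17 (n : ℕ) [NeZero n] (hn : 3 ≤ n) :
    (∀ p : Fin n × Fin n, (Bmat n p).det = 1) ∧
    LinearIndependent ℝ (Bmat n) ∧
    Submodule.span ℝ (Set.range (Bmat n)) = ⊤ := by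
  have hn1 : 1 ≤ n := le_trans (by norm_num) hn
  set a : ℝ := ((1 : ℝ) / 2) ^ (n - 1) with ha
  -- determinants
  have hdet : ∀ p : Fin n × Fin n, (Bmat n p).det = 1 := by
    rintro ⟨i, j⟩
    by_cases hij : i = j
    · simp only [Bmat, if_pos hij, Matrix.det_diagonal]
      exact prod_diag_one hn1 i
    · simp only [Bmat, if_neg hij]
      rw [det_diag_add_std _ hij, Matrix.det_diagonal]
      exact prod_diag_one hn1 0
  -- span
  set S := Submodule.span ℝ (Set.range (Bmat n)) with hS
  have hmem : ∀ p, Bmat n p ∈ S := fun p => Submodule.subset_span ⟨p, rfl⟩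
  have hoff : ∀ i j : Fin n, i ≠ j → Matrix.single i j (1 : ℝ) ∈ S := by
    intro i j hij
    have h1 : Matrix.single i j (1 : ℝ) = Bmat n (i, j) - Bmat n (0, 0) := by
      simp [Bmat, hij]
    rw [h1]
    exact sub_mem (hmem _) (hmem _)
  have hone : (1 : Matrix (Fin n) (Fin n) ℝ) ∈ S := by
    have hsum : (∑ i : Fin n, Bmat n (i, i)) = (a + 2 * n - 2) • (1 : Matrix (Fin n) (Fin n) ℝ) := by
      ext k l
      by_cases hkl : k = l
      · subst hkl
        have hentry : ∀ c : Fin n, Bmat n (c, c) k k = (if c = k then a - 2 else 0) + 2 := by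
          intro c
          by_cases hck : c = k <;> simp [Bmat, hck, eq_comm, ha] <;> ring
        simp only [Matrix.sum_apply, Matrix.smul_apply, Matrix.one_apply_eq, smul_eq_mul, mul_one]
        rw [Finset.sum_congr rfl fun c _ => hentry c, Finset.sum_add_distrib,
          Finset.sum_ite_eq' Finset.univ k (fun _ => a - 2), Finset.sum_const,
          Finset.card_univ, Fintype.card_fin]
        simp only [Finset.mem_univ, if_pos, nsmul_eq_mul]
        ring
      · simp [Bmat, Matrix.sum_apply, Matrix.diagonal_apply_ne _ hkl, Matrix.one_apply_ne hkl]
    have hne : (a + 2 * n - 2) ≠ 0 := by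
      have hapos : 0 < a := by positivity
      have : (3 : ℝ) ≤ (n : ℝ) := by exact_mod_cast hn
      nlinarith
    have : (1 : Matrix (Fin n) (Fin n) ℝ) = (a + 2 * n - 2)⁻¹ • ∑ i : Fin n, Bmat n (i, i) := by
      rw [hsum, smul_smul, inv_mul_cancel₀ hne, one_smul]
    rw [this]
    exact Submodule.smul_mem _ _ (Submodule.sum_mem _ fun i _ => hmem _)
  have hdiagm : ∀ i : Fin n, Matrix.single i i (1 : ℝ) ∈ S := by
    intro i
    have ha2 : a - 2 ≠ 0 := by
      have : a ≤ 1 := by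
        rw [ha]
        apply pow_le_one₀ <;> norm_num
      nlinarith
    have hkey : Bmat n (i, i) - (2 : ℝ) • (1 : Matrix (Fin n) (Fin n) ℝ)
        = (a - 2) • Matrix.single i i (1 : ℝ) := by
      ext k l
      by_cases hkl : k = l
      · subst hkl
        by_cases hki : k = i
        · subst hki
          simp [Bmat, Matrix.single, ha]
        · simp [Bmat, Matrix.single, hki, Ne.symm hki]
      · have hne : ¬(i = k ∧ i = l) := by
          rintro ⟨rfl, h2⟩; exact hkl h2
        simp [Bmat, Matrix.single, Matrix.diagonal_apply_ne _ hkl,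
          Matrix.one_apply_ne hkl, hne]
    have : Matrix.single i i (1 : ℝ)
        = (a - 2)⁻¹ • (Bmat n (i, i) - (2 : ℝ) • (1 : Matrix (Fin n) (Fin n) ℝ)) := by
      rw [hkey, smul_smul, inv_mul_cancel₀ ha2, one_smul]
    rw [this]
    exact Submodule.smul_mem _ _ (sub_mem (hmem _) (Submodule.smul_mem _ _ hone))
  have hstd : ∀ i j : Fin n, Matrix.single i j (1 : ℝ) ∈ S := by
    intro i j
    by_cases hij : i = j
    · subst hij; exact hdiagm i
    · exact hoff i j hij
  have hspan : S = ⊤ := by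
    rw [eq_top_iff]
    intro M _
    rw [Matrix.matrix_eq_sum_single M]
    refine Submodule.sum_mem _ fun i _ => Submodule.sum_mem _ fun j _ => ?_
    have : Matrix.single i j (M i j) = (M i j) • Matrix.single i j (1 : ℝ) := by
      rw [Matrix.smul_single, smul_eq_mul, mul_one]
    rw [this]
    exact Submodule.smul_mem _ _ (hstd i j)
  refine ⟨hdet, ?_, hspan⟩
  apply linearIndependent_of_top_le_span_of_card_eq_finrank (le_of_eq hspan.symm)
  simp [Module.finrank_matrix]
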